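/- arXiv:2012.08038 — 6 statements merged into one kernel-verified Lean document; each statement's English description precedes it below -/
import Mathlib

section
/- Let Z be a normal space, let F = {F_i}_{i∈I} be a closed family combinatorially refining an open family U = {U_i}_{i∈I} of subsets of Z (i.e. F_i ⊂ U_i for all i). If F is locally finite and I is countable, then there exists an open family G = {G_i}_{i∈I} with F_i ⊂ G_i ⊂ cl(G_i) ⊂ U_i for every i ∈ I, such that for every finite K ⊂ I the intersection ∩_{i∈K} G_i is nonempty if and only if ∩_{i∈K} F_i is nonempty (i.e. the nerves of F and G are equal). -/
open Set

attribute [local instance] Classical.propDecidable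

section Swell

variable {Z : Type*} [TopologicalSpace Z] [NormalSpace Z] {I : Type*}


/-- Recursive construction: at step `n = e i` we choose an open swelling of `F i`. -/
noncomputable def swellAux (F U : I → Set Z) (e : I → ℕ) (n : ℕ) : Set Z :=
  if h : ∃ i, e i = n then
    if hx : ∃ V : Set Z, IsOpen V ∧ F h.choose ⊆ V ∧
        closure V ⊆ U h.choose ∩
          (⋃ K ∈ {K : Finset I |
              (⋂ j ∈ K, if _ : e j < n then closure (swellAux F U e (e j)) else F j) ∩
                F h.choose = ∅},
            ⋂ j ∈ K, if _ : e j < n then closure (swellAux F U e (e j)) else F j)ᶜ then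
      hx.choose
    else ∅
  else ∅
termination_by n
decreasing_by all_goals assumption

/-- The auxiliary family at step `n`: updated indices are replaced by closures. -/
noncomputable def DD (F U : I → Set Z) (e : I → ℕ) (n : ℕ) (j : I) : Set Z :=
  if _ : e j < n then closure (swellAux F U e (e j)) else F j

/-- The "bad set" to be avoided at step `n` for index `i`. -/
noncomputable def BB (F U : I → Set Z) (e : I → ℕ) (n : ℕ) (i : I) : Set Z :=
  ⋃ K ∈ {K : Finset I | (⋂ j ∈ K, DD F U e n j) ∩ F i = ∅}, ⋂ j ∈ K, DD F U e n j

lemma swellAux_eq (F U : I → Set Z) (e : I → ℕ) (n : ℕ) :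
    swellAux F U e n =
      if h : ∃ i, e i = n then
        if hx : ∃ V : Set Z, IsOpen V ∧ F h.choose ⊆ V ∧
            closure V ⊆ U h.choose ∩ (BB F U e n h.choose)ᶜ then
          hx.choose
        else ∅
      else ∅ := by
  rw [swellAux]; rfl

variable {F U : I → Set Z} {e : I → ℕ}

lemma isClosed_DD (hFc : ∀ i, IsClosed (F i)) (n : ℕ) (j : I) : IsClosed (DD F U e n j) := by
  unfold DD; split
  · exact isClosed_closure
  · exact hFc j

lemma locallyFinite_DD (hFlf : LocallyFinite F) (he : Function.Injective e) (n : ℕ) :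
    LocallyFinite (DD F U e n) := by
  intro x
  obtain ⟨N, hN, hfin⟩ := hFlf x
  refine ⟨N, hN, ((hfin.union ((Set.finite_Iio n).preimage he.injOn)).subset ?_)⟩
  intro j hj
  by_cases hjn : e j < n
  · exact Or.inr hjn
  · left; simpa [DD, hjn] using hj

lemma isClosed_BB (hFc : ∀ i, IsClosed (F i)) (hFlf : LocallyFinite F)
    (he : Function.Injective e) (n : ℕ) (i : I) : IsClosed (BB F U e n i) := by
  rw [BB, Set.biUnion_eq_iUnion]
  refine LocallyFinite.isClosed_iUnion ?_ ?_
  · intro x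
    obtain ⟨N, hN, hfin⟩ := locallyFinite_DD hFlf he n x
    refine ⟨N, hN, ?_⟩
    have h1 : {t : Set I | t ⊆ {j | (DD F U e n j ∩ N).Nonempty}}.Finite :=
      hfin.finite_subsets
    refine Set.Finite.of_finite_image (f := fun K => (K.1 : Set I)) (h1.subset ?_) ?_
    · rintro t ⟨K, hK, rfl⟩
      obtain ⟨y, hy⟩ := hK
      intro j hj
      exact ⟨y, Set.mem_iInter₂.1 hy.1 j hj, hy.2⟩
    · intro a _ b _ hab
      exact Subtype.ext (Finset.coe_injective hab)
  · rintro ⟨K, hK⟩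
    exact isClosed_biInter fun j _ => isClosed_DD hFc n j

lemma exists_swell (hFc : ∀ i, IsClosed (F i)) (hUo : ∀ i, IsOpen (U i))
    (hFU : ∀ i, F i ⊆ U i) (hFlf : LocallyFinite F) (he : Function.Injective e)
    (n : ℕ) (i : I) :
    ∃ V : Set Z, IsOpen V ∧ F i ⊆ V ∧ closure V ⊆ U i ∩ (BB F U e n i)ᶜ := by
  refine normal_exists_closure_subset (hFc i)
    ((hUo i).inter (isClosed_BB hFc hFlf he n i).isOpen_compl) ?_
  intro x hx
  refine ⟨hFU i hx, ?_⟩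
  intro hxB
  obtain ⟨K, hK, hxK⟩ := Set.mem_iUnion₂.1 hxB
  exact Set.eq_empty_iff_forall_notMem.1 hK x ⟨hxK, hx⟩

lemma swellAux_spec (hFc : ∀ i, IsClosed (F i)) (hUo : ∀ i, IsOpen (U i))
    (hFU : ∀ i, F i ⊆ U i) (hFlf : LocallyFinite F) (he : Function.Injective e) (i : I) :
    IsOpen (swellAux F U e (e i)) ∧ F i ⊆ swellAux F U e (e i) ∧
      closure (swellAux F U e (e i)) ⊆ U i ∩ (BB F U e (e i) i)ᶜ := by
  rw [swellAux_eq]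
  have h : ∃ i', e i' = e i := ⟨i, rfl⟩
  rw [dif_pos h]
  have hc : h.choose = i := he h.choose_spec
  rw [hc]
  have hx := exists_swell hFc hUo hFU hFlf he (e i) i
  rw [dif_pos hx]
  exact hx.choose_spec

lemma F_subset_DD (hFc : ∀ i, IsClosed (F i)) (hUo : ∀ i, IsOpen (U i))
    (hFU : ∀ i, F i ⊆ U i) (hFlf : LocallyFinite F) (he : Function.Injective e)
    (n : ℕ) (j : I) : F j ⊆ DD F U e n j := by
  unfold DD; split
  · exact (swellAux_spec hFc hUo hFU hFlf he j).2.1.trans subset_closure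
  · exact subset_rfl

lemma DD_eq_of_ne (n : ℕ) {j : I} (hj : e j ≠ n) :
    DD F U e (n + 1) j = DD F U e n j := by
  unfold DD
  rcases lt_trichotomy (e j) n with h | h | h
  · rw [dif_pos h, dif_pos (h.trans (Nat.lt_succ_self n))]
  · exact absurd h hj
  · rw [dif_neg (by omega), dif_neg (by omega)]

lemma nonempty_F_of_nonempty_DD (hFc : ∀ i, IsClosed (F i)) (hUo : ∀ i, IsOpen (U i))
    (hFU : ∀ i, F i ⊆ U i) (hFlf : LocallyFinite F) (he : Function.Injective e)
    (n : ℕ) (K : Finset I) :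
    (⋂ j ∈ K, DD F U e n j).Nonempty → (⋂ j ∈ K, F j).Nonempty := by
  induction n with
  | zero => simp [DD]
  | succ n ih =>
    by_cases h : ∃ i, e i = n
    · obtain ⟨i, hi⟩ := h
      by_cases hiK : i ∈ K
      · rintro ⟨x, hx⟩
        apply ih
        by_contra hemp
        rw [Set.not_nonempty_iff_eq_empty] at hemp
        -- split off index i
        have hKi : (⋂ j ∈ K.erase i, DD F U e n j) ∩ F i = ∅ := by
          have : (⋂ j ∈ K, DD F U e n j)
              = (⋂ j ∈ K.erase i, DD F U e n j) ∩ DD F U e n i := by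
            conv_lhs => rw [← Finset.insert_erase hiK]
            rw [Finset.set_biInter_insert, Set.inter_comm]
          have hDDi : DD F U e n i = F i := by
            unfold DD; rw [dif_neg (by omega)]
          rw [this, hDDi] at hemp
          exact hemp
        -- x is in all the old sets for j ≠ i
        have hxe : x ∈ ⋂ j ∈ K.erase i, DD F U e n j := by
          refine Set.mem_iInter₂.2 fun j hj => ?_
          have hjne : e j ≠ n := fun hjn => (Finset.mem_erase.1 hj).1 (he (hjn.trans hi.symm))
          rw [← DD_eq_of_ne n hjne]
          exact Set.mem_iInter₂.1 hx j (Finset.mem_of_mem_erase hj)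
        have hxB : x ∈ BB F U e n i :=
          Set.mem_iUnion₂.2 ⟨K.erase i, hKi, hxe⟩
        -- but x is in closure of the swelling, avoiding BB
        have hxc : x ∈ closure (swellAux F U e (e i)) := by
          have := Set.mem_iInter₂.1 hx i hiK
          have hDDi : DD F U e (n + 1) i = closure (swellAux F U e (e i)) := by
            unfold DD; rw [dif_pos (by omega)]
          rwa [hDDi] at this
        have := (swellAux_spec hFc hUo hFU hFlf he i).2.2 hxc
        rw [hi] at this
        exact this.2 hxB
      · intro hne
        apply ih
        refine hne.mono (Set.iInter₂_mono fun j hj => ?_)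
        have hjne : e j ≠ n := fun hjn => hiK (he (hjn.trans hi.symm) ▸ hj)
        rw [DD_eq_of_ne n hjne]
    · intro hne
      apply ih
      refine hne.mono (Set.iInter₂_mono fun j hj => ?_)
      rw [DD_eq_of_ne n (fun hjn => h ⟨j, hjn⟩)]

end Swell

/-- **Proposition.** Let `Z` be a normal space, `F = {F i}` a closed family combinatorially
refining an open family `U = {U i}` (that is, `F i ⊆ U i` for all `i`).  If `F` is locally
finite and the index set `I` is countable, then there exists an open family `G = {G i}` with
`F i ⊆ G i ⊆ closure (G i) ⊆ U i` for every `i` and such that the nerves of `F` and `G`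
are equal: for every finite `K ⊆ I`, `⋂ i ∈ K, G i` is nonempty iff `⋂ i ∈ K, F i` is. -/
theorem exists_open_swelling_same_nerve_of_countable
    {Z : Type*} [TopologicalSpace Z] [NormalSpace Z] {I : Type*} [Countable I]
    (F U : I → Set Z) (hFc : ∀ i, IsClosed (F i)) (hUo : ∀ i, IsOpen (U i))
    (hFU : ∀ i, F i ⊆ U i) (hFlf : LocallyFinite F) :
    ∃ G : I → Set Z, (∀ i, IsOpen (G i)) ∧
      (∀ i, F i ⊆ G i) ∧ (∀ i, closure (G i) ⊆ U i) ∧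
      ∀ K : Finset I, (⋂ i ∈ K, G i).Nonempty ↔ (⋂ i ∈ K, F i).Nonempty := by
  obtain ⟨e, he⟩ := exists_injective_nat I
  refine ⟨fun i => swellAux F U e (e i), fun i => (swellAux_spec hFc hUo hFU hFlf he i).1,
    fun i => (swellAux_spec hFc hUo hFU hFlf he i).2.1,
    fun i => (swellAux_spec hFc hUo hFU hFlf he i).2.2.trans (Set.inter_subset_left),
    fun K => ⟨?_, ?_⟩⟩
  · intro hne
    set n := (K.sup e) + 1 with hn
    apply nonempty_F_of_nonempty_DD hFc hUo hFU hFlf he n K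
    refine hne.mono (Set.iInter₂_mono fun j hj => ?_)
    have hjn : e j < n := Nat.lt_succ_of_le (Finset.le_sup hj)
    have : DD F U e n j = closure (swellAux F U e (e j)) := by
      unfold DD; rw [dif_pos hjn]
    rw [this]
    exact subset_closure
  · intro hne
    exact hne.mono (Set.iInter₂_mono fun j _ =>
      (swellAux_spec hFc hUo hFU hFlf he j).2.1)
end

section
/- Let Z be a normal space, let F = {F_i}_{i∈I} be a closed family combinatorially refining an open family U = {U_i}_{i∈I} of subsets of Z. If both families F and U are locally finite, then there exists an open locally finite family G = {G_i}_{i∈I} with F_i ⊂ G_i ⊂ cl(G_i) ⊂ U_i for every i ∈ I and such that the nerves of F and G are equal. -/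
theorem chain_finset_subset {α : Type*} {c : Set (Set α)} (hc : IsChain (· ⊆ ·) c)
    (hne : c.Nonempty) (t : Finset α) (ht : ∀ x ∈ t, ∃ s ∈ c, x ∈ s) :
    ∃ s ∈ c, ∀ x ∈ t, x ∈ s := by
  classical
  induction t using Finset.induction with
  | empty => exact hne.imp fun s hs => ⟨hs, by simp⟩
  | @insert a t ha ih =>
    obtain ⟨s, hs, hts⟩ := ih fun x hx => ht x (Finset.mem_insert_of_mem hx)
    obtain ⟨s', hs', ha'⟩ := ht a (Finset.mem_insert_self a t)
    rcases eq_or_ne s s' with rfl | hss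
    · exact ⟨s, hs, fun x hx => by
        rcases Finset.mem_insert.1 hx with rfl | hx
        exacts [ha', hts x hx]⟩
    · rcases hc hs hs' hss with h | h
      · exact ⟨s', hs', fun x hx => by
          rcases Finset.mem_insert.1 hx with rfl | hx
          exacts [ha', h (hts x hx)]⟩
      · exact ⟨s, hs, fun x hx => by
          rcases Finset.mem_insert.1 hx with rfl | hx
          exacts [h ha', hts x hx]⟩

/-- **Theorem.** Let `Z` be a normal space, `F = {F i}` a closed family combinatorially
refining an open family `U = {U i}` (that is, `F i ⊆ U i` for all `i`).  If both families
`F` and `U` are locally finite, then there exists an open locally finite family `G = {G i}`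
with `F i ⊆ G i ⊆ closure (G i) ⊆ U i` for every `i` and such that the nerves of `F` and
`G` are equal: for every finite `K ⊆ I`, `⋂ i ∈ K, G i` is nonempty iff `⋂ i ∈ K, F i` is. -/
theorem exists_open_locallyFinite_swelling_same_nerve
    {Z : Type*} [TopologicalSpace Z] [NormalSpace Z] {I : Type*}
    (F U : I → Set Z) (hFc : ∀ i, IsClosed (F i)) (hUo : ∀ i, IsOpen (U i))
    (hFU : ∀ i, F i ⊆ U i) (hFlf : LocallyFinite F) (hUlf : LocallyFinite U) :
    ∃ G : I → Set Z, (∀ i, IsOpen (G i)) ∧ LocallyFinite G ∧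
      (∀ i, F i ⊆ G i) ∧ (∀ i, closure (G i) ⊆ U i) ∧
      ∀ K : Finset I, (⋂ i ∈ K, G i).Nonempty ↔ (⋂ i ∈ K, F i).Nonempty := by
  classical
  -- `Ok s` : `s` is the graph of a partial swelling.
  set Ok : Set (Set (I × Set Z)) := {s |
    (∀ p ∈ s, ∀ q ∈ s, Prod.fst p = Prod.fst q → Prod.snd p = Prod.snd q) ∧
    (∀ p ∈ s, IsOpen (Prod.snd p) ∧ F (Prod.fst p) ⊆ Prod.snd p ∧
      closure (Prod.snd p) ⊆ U (Prod.fst p)) ∧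
    (∀ K : Finset I, ∀ h : I → Set Z,
      (∀ j ∈ K, (j, h j) ∈ s ∨ (h j = F j ∧ ∀ A, (j, A) ∉ s)) →
      (⋂ j ∈ K, F j) = ∅ → (⋂ j ∈ K, closure (h j)) = ∅)} with hOkdef
  have hempty : (∅ : Set (I × Set Z)) ∈ Ok := by
    refine ⟨by simp, by simp, fun K h hh hF => ?_⟩
    have : ∀ j ∈ K, closure (h j) = F j := by
      intro j hj
      rcases hh j hj with h1 | ⟨h1, _⟩
      · exact absurd h1 (Set.notMem_empty _)
      · rw [h1, (hFc j).closure_eq]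
    calc (⋂ j ∈ K, closure (h j)) = ⋂ j ∈ K, F j := Set.iInter₂_congr this
      _ = ∅ := hF
  -- Zorn's lemma
  obtain ⟨m, -, hmOk, hmax⟩ : ∃ m, (∅ : Set (I × Set Z)) ⊆ m ∧ Maximal (· ∈ Ok) m := by
    refine zorn_subset_nonempty Ok ?_ ∅ hempty
    intro c hcOk hchain hcne
    refine ⟨⋃₀ c, ⟨?_, ?_, ?_⟩, fun s hs => Set.subset_sUnion_of_mem hs⟩
    · rintro p ⟨s1, hs1, hp⟩ q ⟨s2, hs2, hq⟩ hfst
      rcases eq_or_ne s1 s2 with rfl | hss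
      · exact (hcOk hs1).1 p hp q hq hfst
      · rcases hchain hs1 hs2 hss with h | h
        · exact (hcOk hs2).1 p (h hp) q hq hfst
        · exact (hcOk hs1).1 p hp q (h hq) hfst
    · rintro p ⟨s1, hs1, hp⟩
      exact (hcOk hs1).2.1 p hp
    · intro K h hh hF
      obtain ⟨s, hsc, hs⟩ := chain_finset_subset hchain hcne
        ((K.filter (fun j => (j, h j) ∈ ⋃₀ c)).image (fun j => (j, h j)))
        (by
          intro x hx
          simp only [Finset.mem_image, Finset.mem_filter] at hx
          obtain ⟨j, ⟨-, hj⟩, rfl⟩ := hx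
          exact hj)
      refine (hcOk hsc).2.2 K h (fun j hj => ?_) hF
      rcases hh j hj with h1 | ⟨h1, h2⟩
      · exact Or.inl (hs _ (Finset.mem_image_of_mem _ (Finset.mem_filter.2 ⟨hj, h1⟩)))
      · exact Or.inr ⟨h1, fun A hA => h2 A (Set.mem_sUnion.2 ⟨s, hsc, hA⟩)⟩
  obtain ⟨hfun, hpt, hnerve⟩ := hmOk
  -- The candidate function: value of the partial function, or `F j` where undefined.
  set h : I → Set Z := fun j => if hj : ∃ A, (j, A) ∈ m then hj.choose else F j with hhdef
  have hmem : ∀ j, (j, h j) ∈ m ∨ (h j = F j ∧ ∀ A, (j, A) ∉ m) := by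
    intro j
    by_cases hj : ∃ A, (j, A) ∈ m
    · left; simp only [hhdef, dif_pos hj]; exact hj.choose_spec
    · right
      exact ⟨by simp only [hhdef, dif_neg hj], fun A hA => hj ⟨A, hA⟩⟩
  have hclosureU : ∀ j, closure (h j) ⊆ U j ∪ F j := by
    intro j
    rcases hmem j with h1 | ⟨h1, -⟩
    · exact (hpt _ h1).2.2.trans Set.subset_union_left
    · rw [h1, (hFc j).closure_eq]; exact Set.subset_union_right
  -- Every index is in the domain of the maximal partial swelling.
  have htotal : ∀ i, ∃ A, (i, A) ∈ m := by
    intro i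
    by_contra habs
    push_neg at habs
    have hhi : h i = F i := by simp only [hhdef, dif_neg (not_exists.2 fun A => habs A)]
    -- the "forbidden" closed set
    set T : Finset I → Set Z := fun K =>
      if i ∈ K ∧ (⋂ j ∈ K, F j) = ∅ then ⋂ j ∈ K.erase i, closure (h j) else ∅ with hTdef
    have hTclosed : ∀ K, IsClosed (T K) := by
      intro K
      simp only [hTdef]
      split
      · exact isClosed_biInter fun j _ => isClosed_closure
      · exact isClosed_empty
    have hTlf : LocallyFinite T := by
      intro x
      obtain ⟨V1, hV1, hV1f⟩ := hUlf x
      obtain ⟨V2, hV2, hV2f⟩ := hFlf x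
      refine ⟨V1 ∩ V2, Filter.inter_mem hV1 hV2, ?_⟩
      have hJ0 : {j | ((V1 ∩ V2) ∩ (U j ∪ F j)).Nonempty}.Finite := by
        refine (hV1f.union hV2f).subset ?_
        rintro j ⟨x, hxV, hxU | hxF⟩
        · exact Or.inl ⟨x, hxU, hxV.1⟩
        · exact Or.inr ⟨x, hxF, hxV.2⟩
      have : {K | (T K ∩ (V1 ∩ V2)).Nonempty} ⊆
          {K : Finset I | (K : Set I) ⊆ {j | ((V1 ∩ V2) ∩ (U j ∪ F j)).Nonempty} ∪ {i}} := by
        intro K hK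
        obtain ⟨x, hxT, hxV⟩ := hK
        intro j hj
        rcases eq_or_ne j i with rfl | hji
        · exact Or.inr rfl
        · left
          have hjK : j ∈ K.erase i := Finset.mem_erase.2 ⟨hji, hj⟩
          have hxTK : x ∈ T K := hxT
          simp only [hTdef] at hxTK
          split at hxTK
          · have hxj : x ∈ closure (h j) := by
              have := Set.mem_iInter₂.1 hxTK j hjK
              exact this
            exact ⟨x, hxV, hclosureU j hxj⟩
          · exact absurd hxTK (Set.notMem_empty x)
      refine Set.Finite.subset ?_ this
      have : {K : Finset I | (K : Set I) ⊆ {j | ((V1 ∩ V2) ∩ (U j ∪ F j)).Nonempty} ∪ {i}} =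
          (fun K : Finset I => (K : Set I)) ⁻¹'
            {t | t ⊆ {j | ((V1 ∩ V2) ∩ (U j ∪ F j)).Nonempty} ∪ {i}} := rfl
      rw [this]
      exact Set.Finite.preimage (Set.injOn_of_injective Finset.coe_injective)
        ((hJ0.union (Set.finite_singleton i)).finite_subsets)
    set C : Set Z := ⋃ K, T K with hCdef
    have hCclosed : IsClosed C := hTlf.isClosed_iUnion hTclosed
    have hFiC : F i ∩ C = ∅ := by
      rw [Set.eq_empty_iff_forall_notMem]
      rintro x ⟨hxF, hxC⟩
      obtain ⟨K, hxK⟩ := Set.mem_iUnion.1 hxC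
      simp only [hTdef] at hxK
      split at hxK
      case isTrue hcond =>
        have hKempty : (⋂ j ∈ K, closure (h j)) = ∅ := hnerve K h (fun j hj => hmem j) hcond.2
        have hxall : x ∈ ⋂ j ∈ K, closure (h j) := by
          rw [← Finset.insert_erase hcond.1]
          rw [Finset.set_biInter_insert]
          refine ⟨?_, hxK⟩
          rw [hhi, (hFc i).closure_eq]
          exact hxF
        rw [hKempty] at hxall
        exact hxall
      case isFalse => exact hxK
    -- use normality to pick a swelling of `F i`
    obtain ⟨A, hAopen, hFA, hAcl⟩ := normal_exists_closure_subset (hFc i)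
      ((hUo i).sdiff hCclosed)
      (by
        intro x hx
        refine ⟨hFU i hx, fun hxC => ?_⟩
        rw [Set.eq_empty_iff_forall_notMem] at hFiC
        exact hFiC x ⟨hx, hxC⟩)
    -- extend the partial swelling, contradicting maximality
    have hm' : insert (i, A) m ∈ Ok := by
      refine ⟨?_, ?_, ?_⟩
      · rintro ⟨p1, p2⟩ hp ⟨q1, q2⟩ hq hfst
        simp only [Set.mem_insert_iff, Prod.mk.injEq] at hp hq
        dsimp only at hfst ⊢
        subst hfst
        rcases hp with ⟨rfl, rfl⟩ | hp
        · rcases hq with ⟨-, rfl⟩ | hq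
          · rfl
          · exact absurd hq (habs _)
        · rcases hq with ⟨rfl, rfl⟩ | hq
          · exact absurd hp (habs _)
          · exact hfun _ hp _ hq rfl
      · rintro p (rfl | hp)
        · exact ⟨hAopen, hFA, hAcl.trans Set.diff_subset⟩
        · exact hpt p hp
      · intro K h' hh' hF'
        have hne : ∀ j ∈ K, j ≠ i → ((j, h' j) ∈ m ∨ (h' j = F j ∧ ∀ B, (j, B) ∉ m)) := by
          intro j hj hji
          rcases hh' j hj with h1 | ⟨h1, h2⟩
          · rcases h1 with h1 | h1
            · exact absurd (congrArg Prod.fst h1) (by simpa using hji)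
            · exact Or.inl h1
          · exact Or.inr ⟨h1, fun B hB => h2 B (Set.mem_insert_iff.2 (Or.inr hB))⟩
        by_cases hiK : i ∈ K
        · -- `h' i = A`
          have hh'i : h' i = A := by
            rcases hh' i hiK with h1 | ⟨-, h2⟩
            · rcases h1 with h1 | h1
              · exact congrArg Prod.snd h1
              · exact absurd h1 (habs _)
            · exact absurd (Set.mem_insert _ _) (h2 A)
          -- closures of `h'` agree with closures of `h` away from `i`
          have hagree : ∀ j ∈ K.erase i, closure (h' j) = closure (h j) := by
            intro j hj
            obtain ⟨hji, hjK⟩ := Finset.mem_erase.1 hj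
            rcases hne j hjK hji with h1 | ⟨h1, h2⟩
            · have hjex : ∃ B, (j, B) ∈ m := ⟨h' j, h1⟩
              have : h j = hjex.choose := by simp only [hhdef, dif_pos hjex]
              have heq : h' j = h j := by
                rw [this]
                exact hfun (j, h' j) h1 (j, hjex.choose) hjex.choose_spec rfl
              rw [heq]
            · have hjabs : ¬∃ B, (j, B) ∈ m := fun ⟨B, hB⟩ => h2 B hB
              have : h j = F j := by simp only [hhdef, dif_neg hjabs]
              rw [h1, this]
          have hsub : (⋂ j ∈ K.erase i, closure (h' j)) ⊆ C := by
            have : (⋂ j ∈ K.erase i, closure (h' j)) = ⋂ j ∈ K.erase i, closure (h j) :=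
              Set.iInter₂_congr hagree
            rw [this]
            refine Set.subset_iUnion_of_subset K ?_
            have hTK : T K = ⋂ j ∈ K.erase i, closure (h j) := by
              simp only [hTdef]
              rw [if_pos ⟨hiK, hF'⟩]
            rw [hTK]
          rw [Set.eq_empty_iff_forall_notMem]
          intro x hx
          have hx' : x ∈ ⋂ j ∈ K.erase i, closure (h' j) := by
            rw [Set.mem_iInter₂]
            intro j hj
            exact Set.mem_iInter₂.1 hx j (Finset.mem_erase.1 hj).2
          have hxA : x ∈ closure A := by
            have := Set.mem_iInter₂.1 hx i hiK
            rwa [hh'i] at this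
          exact (hAcl hxA).2 (hsub hx')
        · -- `i ∉ K`: use the old nerve condition
          exact hnerve K h' (fun j hj => hne j hj (fun hji => hiK (hji ▸ hj))) hF'
    have : insert (i, A) m ⊆ m := hmax hm' (Set.subset_insert _ _)
    exact habs A (this (Set.mem_insert _ _))
  -- All indices present: extract the swelling.
  have hmemm : ∀ i, (i, h i) ∈ m := by
    intro i
    rcases hmem i with h1 | ⟨-, h2⟩
    · exact h1
    · obtain ⟨A, hA⟩ := htotal i
      exact absurd hA (h2 A)
  refine ⟨h, fun i => (hpt _ (hmemm i)).1, ?_, fun i => (hpt _ (hmemm i)).2.1,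
    fun i => (hpt _ (hmemm i)).2.2, ?_⟩
  · exact hUlf.subset fun i => subset_closure.trans (hpt _ (hmemm i)).2.2
  · intro K
    constructor
    · intro hne
      by_contra hF
      rw [Set.not_nonempty_iff_eq_empty] at hF
      have := hnerve K h (fun j _ => Or.inl (hmemm j)) hF
      obtain ⟨x, hx⟩ := hne
      have hx' : x ∈ ⋂ j ∈ K, closure (h j) :=
        Set.mem_iInter₂.2 fun j hj => subset_closure (Set.mem_iInter₂.1 hx j hj)
      rw [this] at hx'
      exact hx'
    · rintro ⟨x, hx⟩
      exact ⟨x, Set.mem_iInter₂.2 fun j hj => (hpt _ (hmemm j)).2.1 (Set.mem_iInter₂.1 hx j hj)⟩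
end

section
/- Let X be a paracompact Hausdorff space and F = {F_i}_{i∈I} a locally finite closed family of subsets of X. Then there exists a locally finite open family U = {U_i}_{i∈I} of subsets of X with F_i ⊂ U_i for every i ∈ I. -/
open Set

/-- **Theorem.** Let `X` be a paracompact Hausdorff space and `F = {F i}` a locally finite
closed family of subsets of `X`. Then there exists a locally finite open family `U = {U i}`
of subsets of `X` with `F i ⊆ U i` for every `i`. -/
theorem exists_locallyFinite_open_swelling
    {X : Type*} [TopologicalSpace X] [ParacompactSpace X] [T2Space X] {I : Type*}
    (F : I → Set X) (hFc : ∀ i, IsClosed (F i)) (hFlf : LocallyFinite F) :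
    ∃ U : I → Set X, (∀ i, IsOpen (U i)) ∧ LocallyFinite U ∧ ∀ i, F i ⊆ U i := by
  -- For each `x`, choose a neighborhood `V x` meeting only finitely many `F i`.
  choose V hV hVfin using hFlf
  -- By regularity, shrink to an open cover `G` with `closure (G x) ⊆ V x`.
  have hG : ∀ x : X, ∃ G : Set X, IsOpen G ∧ x ∈ G ∧ closure G ⊆ V x := by
    intro x
    rcases (closed_nhds_basis x).mem_iff.mp (hV x) with ⟨s, ⟨hs, hscl⟩, hsV⟩
    exact ⟨interior s, isOpen_interior, mem_interior_iff_mem_nhds.2 hs,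
      (closure_minimal interior_subset hscl).trans hsV⟩
  choose G hGo hGx hGV using hG
  -- Take a precise locally finite open refinement `W` of the cover `G`.
  rcases precise_refinement G hGo (iUnion_eq_univ_iff.2 fun x => ⟨x, hGx x⟩)
    with ⟨W, hWo, hWU, hWlf, hWG⟩
  -- Define `U i` as the complement of the union of closures of `W a` disjoint from `F i`.
  set U : I → Set X := fun i =>
    (⋃ a : {a : X // Disjoint (closure (W a)) (F i)}, closure (W (a : X)))ᶜ with hU
  refine ⟨U, fun i => ?_, ?_, fun i x hx => ?_⟩
  · -- openness
    rw [hU]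
    exact ((hWlf.closure.comp_injective Subtype.val_injective).isClosed_iUnion
      fun a => isClosed_closure).isOpen_compl
  · -- local finiteness
    intro x
    rcases hWlf x with ⟨N, hN, hNfin⟩
    refine ⟨N, hN, ?_⟩
    have key : {i | (U i ∩ N).Nonempty} ⊆
        ⋃ a ∈ {a | (W a ∩ N).Nonempty}, {i | (F i ∩ V a).Nonempty} := by
      rintro i ⟨y, hyU, hyN⟩
      have hy : y ∈ ⋃ a, W a := hWU ▸ mem_univ y
      rcases mem_iUnion.1 hy with ⟨a, ha⟩
      refine mem_iUnion₂.2 ⟨a, ⟨y, ha, hyN⟩, ?_⟩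
      -- `y ∈ U i` and `y ∈ closure (W a)`, so `closure (W a)` is not disjoint from `F i`
      by_contra h
      have hdis : Disjoint (closure (W a)) (F i) := by
        rw [Set.disjoint_right]
        intro z hz hzc
        exact h ⟨z, hz, hGV a (closure_mono (hWG a) hzc)⟩
      exact hyU (mem_iUnion.2 ⟨⟨a, hdis⟩, subset_closure ha⟩)
    exact (hNfin.biUnion fun a _ => hVfin a).subset key
  · -- `F i ⊆ U i`
    rw [hU]
    intro hmem
    rcases mem_iUnion.1 hmem with ⟨⟨a, hdis⟩, hxa⟩
    exact (Set.disjoint_left.1 hdis hxa) hx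
end

section
/- Let X be a paracompact Hausdorff space, F = {F_i}_{i∈I} a locally finite closed family combinatorially refining an open family U = {U_i}_{i∈I} of subsets of X (F_i ⊂ U_i for all i). Then there exists an open locally finite family G = {G_i}_{i∈I} with F_i ⊂ G_i ⊂ cl(G_i) ⊂ U_i for every i ∈ I and the nerves of F and G are equal. -/
open Topology


/-- **Theorem.** Let `X` be a paracompact Hausdorff space, `F = {F i}` a locally finite
closed family combinatorially refining an open family `U = {U i}` (`F i ⊆ U i` for all
`i`; `U` is not assumed locally finite).  Then there exists an open locally finite family
`G = {G i}` with `F i ⊆ G i ⊆ closure (G i) ⊆ U i` for every `i` and such that the nerves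
of `F` and `G` are equal. -/
theorem exists_open_locallyFinite_swelling_same_nerve_of_paracompact
    {X : Type*} [TopologicalSpace X] [ParacompactSpace X] [T2Space X] {I : Type*}
    (F U : I → Set X) (hFc : ∀ i, IsClosed (F i)) (hUo : ∀ i, IsOpen (U i))
    (hFU : ∀ i, F i ⊆ U i) (hFlf : LocallyFinite F) :
    ∃ G : I → Set X, (∀ i, IsOpen (G i)) ∧ LocallyFinite G ∧
      (∀ i, F i ⊆ G i) ∧ (∀ i, closure (G i) ⊆ U i) ∧
      ∀ K : Finset I, (⋂ i ∈ K, G i).Nonempty ↔ (⋂ i ∈ K, F i).Nonempty := by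
  classical
  -- Step 1: for each point `x` choose a small open neighborhood `W x` that meets `F i` only
  -- for `i` with `x ∈ F i`, and whose closure is contained in all `U i` with `x ∈ F i`.
  have key : ∀ x : X, ∃ W : Set X, IsOpen W ∧ x ∈ W ∧
      (∀ i, (W ∩ F i).Nonempty → x ∈ F i) ∧ (∀ i, x ∈ F i → closure W ⊆ U i) := by
    intro x
    have hS : {i | x ∈ F i}.Finite := hFlf.point_finite x
    set M : Set X := (⋂ i ∈ {i | x ∈ F i}, U i) ∩ ⋂ (i) (_ : x ∉ F i), (F i)ᶜ with hM
    have hMnhds : M ∈ 𝓝 x := by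
      refine Filter.inter_mem ?_ (hFlf.iInter_compl_mem_nhds hFc x)
      exact ((hS.isOpen_biInter fun i _ => hUo i).mem_nhds
        (Set.mem_iInter₂.2 fun i hi => hFU i hi))
    obtain ⟨t, htn, htc, htM⟩ := exists_mem_nhds_isClosed_subset hMnhds
    refine ⟨interior t, isOpen_interior, mem_interior_iff_mem_nhds.2 htn, ?_, ?_⟩
    · rintro i ⟨y, hyW, hyF⟩
      by_contra hxi
      have hyM : y ∈ M := htM (interior_subset hyW)
      exact (Set.mem_iInter₂.1 hyM.2 i hxi) hyF
    · intro i hxi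
      refine (closure_minimal interior_subset htc).trans ?_
      exact fun y hy => Set.mem_iInter₂.1 (htM hy).1 i hxi
  choose W hWo hWx hW2 hW3 using key
  -- Step 2: a locally finite open precise refinement `O` of the cover `W`.
  obtain ⟨O, hOo, hOu, hOlf, hOW⟩ :=
    precise_refinement W hWo (Set.iUnion_eq_univ_iff.2 fun x => ⟨x, hWx x⟩)
  -- Step 3: shrink it to a closed cover `C` with `C x ⊆ O x`.
  obtain ⟨V, hVu, hVo, hVc⟩ :=
    exists_iUnion_eq_closure_subset hOo (fun x => hOlf.point_finite x) hOu
  set C : X → Set X := fun x => closure (V x) with hCdef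
  have hClf : LocallyFinite C := hOlf.subset hVc
  have hCcov : ∀ y : X, ∃ a, y ∈ C a := by
    intro y
    have : y ∈ ⋃ x, V x := hVu ▸ Set.mem_univ y
    obtain ⟨a, ha⟩ := Set.mem_iUnion.1 this
    exact ⟨a, subset_closure ha⟩
  -- Step 4: the "barycentric" cover `E`.
  set Q : X → Set X := fun z =>
    (⋂ x ∈ {x | z ∈ C x}, O x) ∩ ⋂ (x) (_ : z ∉ C x), (C x)ᶜ with hQdef
  set E : X → Set X := fun z => interior (Q z) with hEdef
  have hQnhds : ∀ z, Q z ∈ 𝓝 z := by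
    intro z
    refine Filter.inter_mem ?_ (hClf.iInter_compl_mem_nhds (fun x => isClosed_closure) z)
    exact ((hClf.point_finite z).isOpen_biInter fun x _ => hOo x).mem_nhds
      (Set.mem_iInter₂.2 fun x hx => hVc x hx)
  have hEz : ∀ z, z ∈ E z := fun z => mem_interior_iff_mem_nhds.2 (hQnhds z)
  have hEkey : ∀ y a z, y ∈ C a → y ∈ E z → E z ⊆ O a := by
    intro y a z hya hyz
    have hyQ : y ∈ Q z := interior_subset hyz
    have hza : z ∈ C a := by
      by_contra hza
      exact (Set.mem_iInter₂.1 hyQ.2 a hza) hya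
    exact fun w hw => Set.mem_iInter₂.1 (interior_subset hw).1 a hza
  -- Step 5: locally finite open precise refinement `P` of `E`.
  obtain ⟨P, hPo, hPu, hPlf, hPE⟩ :=
    precise_refinement E (fun z => isOpen_interior)
      (Set.iUnion_eq_univ_iff.2 fun z => ⟨z, hEz z⟩)
  -- The key combinatorial property.
  have key2 : ∀ y : X, ∃ a, (∀ z, y ∈ E z → E z ⊆ W a) ∧
      ∀ i, (W a ∩ F i).Nonempty → a ∈ F i := by
    intro y
    obtain ⟨a, hya⟩ := hCcov y
    exact ⟨a, fun z hz => (hEkey y a z hya hz).trans ((hOW a).trans (Set.Subset.refl _)),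
      hW2 a⟩
  -- Step 6: define the swelling `G`.
  set G : I → Set X := fun i => ⋃ (y : X) (_ : (P y ∩ F i).Nonempty), P y with hGdef
  have hPWsub : ∀ y : X, ∃ a, P y ⊆ W a ∧ closure (W a) ⊆ ⋂ i ∈ {i | (W a ∩ F i).Nonempty}, U i
      ∧ ∀ i, (W a ∩ F i).Nonempty → a ∈ F i := by
    intro y
    obtain ⟨a, hsub, hmeet⟩ := key2 y
    refine ⟨a, (hPE y).trans (hsub y (hEz y)), ?_, hmeet⟩
    exact Set.subset_iInter₂ fun i hi => hW3 a i (hmeet i hi)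
  have hfinP : ∀ y : X, {i | (P y ∩ F i).Nonempty}.Finite := by
    intro y
    obtain ⟨a, hPW, _, hmeet⟩ := hPWsub y
    exact (hFlf.point_finite a).subset fun i ⟨w, hw1, hw2⟩ => hmeet i ⟨w, hPW hw1, hw2⟩
  refine ⟨G, ?_, ?_, ?_, ?_, ?_⟩
  · exact fun i => isOpen_iUnion fun y => isOpen_iUnion fun _ => hPo y
  · -- local finiteness
    intro x
    obtain ⟨n, hn, hnf⟩ := hPlf x
    refine ⟨n, hn, ?_⟩
    have : {i | (G i ∩ n).Nonempty} ⊆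
        ⋃ y ∈ {y | (P y ∩ n).Nonempty}, {i | (P y ∩ F i).Nonempty} := by
      rintro i ⟨w, hwG, hwn⟩
      obtain ⟨y, hy, hwy⟩ := Set.mem_iUnion₂.1 hwG
      exact Set.mem_iUnion₂.2 ⟨y, ⟨w, hwy, hwn⟩, hy⟩
    exact ((hnf.biUnion fun y _ => hfinP y).subset this)
  · -- F i ⊆ G i
    intro i x hx
    have : x ∈ ⋃ y, P y := hPu ▸ Set.mem_univ x
    obtain ⟨y, hy⟩ := Set.mem_iUnion.1 this
    exact Set.mem_iUnion₂.2 ⟨y, ⟨x, hy, hx⟩, hy⟩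
  · -- closure G i ⊆ U i
    intro i
    have hGeq : G i = ⋃ (y : {y : X // (P y ∩ F i).Nonempty}), P y.1 := by
      simp [hGdef, Set.iUnion_subtype]
    rw [hGeq,
      show (⋃ (y : {y : X // (P y ∩ F i).Nonempty}), P y.1)
          = ⋃ y : {y : X // (P y ∩ F i).Nonempty}, (P ∘ Subtype.val) y from rfl,
      (hPlf.comp_injective Subtype.val_injective).closure_iUnion]
    refine Set.iUnion_subset fun y => ?_
    obtain ⟨a, hPW, hclW, hmeet⟩ := hPWsub y.1
    obtain ⟨w, hw1, hw2⟩ := y.2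
    have hai : (W a ∩ F i).Nonempty := ⟨w, hPW hw1, hw2⟩
    exact (closure_mono hPW).trans ((hclW).trans (Set.iInter₂_subset i hai))
  · -- nerves coincide
    intro K
    constructor
    · rintro ⟨y, hy⟩
      obtain ⟨a, hsub, hmeet⟩ := key2 y
      refine ⟨a, Set.mem_iInter₂.2 fun i hi => ?_⟩
      have hyG : y ∈ G i := Set.mem_iInter₂.1 hy i hi
      obtain ⟨z, hz, hyz⟩ := Set.mem_iUnion₂.1 hyG
      obtain ⟨w, hw1, hw2⟩ := hz
      have hEzW : E z ⊆ W a := hsub z (hPE z hyz)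
      exact hmeet i ⟨w, hEzW (hPE z hw1), hw2⟩
    · rintro ⟨y, hy⟩
      refine ⟨y, Set.mem_iInter₂.2 fun i hi => ?_⟩
      have hyF : y ∈ F i := Set.mem_iInter₂.1 hy i hi
      have : y ∈ ⋃ z, P z := hPu ▸ Set.mem_univ y
      obtain ⟨z, hz⟩ := Set.mem_iUnion.1 this
      exact Set.mem_iUnion₂.2 ⟨z, ⟨y, hz, hyF⟩, hz⟩
end

section
/- Let K^{p,q} (p,q ≥ 0) be a double complex of modules over a ring R with anti-commuting differentials d : K^{p,q} → K^{p,q+1} and δ : K^{p,q} → K^{p+1,q} (d∘d = 0, δ∘δ = 0, d∘δ + δ∘d = 0). Let T^n = ⊕_{p+q=n} K^{p,q} with differential ∂ = d + δ, and let L^p = ker(d : K^{p,0} → K^{p,1}), which forms a subcomplex (L^•, δ) of T^•. If for every p ≥ 0 the row complex (K^{p,•}, d) is exact, then the inclusion L^• → T^• induces an isomorphism on cohomology in every degree. -/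
namespace DoubleComplexCohomology

variable {R : Type*} [Ring R] {K : ℕ → ℕ → Type*}
  [∀ p q, AddCommGroup (K p q)] [∀ p q, Module R (K p q)]

/-- The total differential `∂ = d + δ` of a (first-quadrant, anti-commutative) double
complex, acting on the graded pieces of the total complex (realised inside the full
product `∀ p q, K p q`): the component of `∂ f` in bidegree `(p, q)` is
`d (f p (q-1)) + δ (f (p-1) q)` (the terms with a negative index being `0`). -/
def totD (d : ∀ p q, K p q →ₗ[R] K p (q + 1)) (δ : ∀ p q, K p q →ₗ[R] K (p + 1) q)
    (f : ∀ p q, K p q) : ∀ p q, K p q := fun p q =>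
  (match (motive := ∀ q, K p q) q with
    | 0 => (0 : K p 0)
    | Nat.succ q' => d p q' (f p q')) +
  (match (motive := ∀ p, K p q) p with
    | 0 => (0 : K 0 q)
    | Nat.succ p' => δ p' q (f p' q))

section Aux
variable (d : ∀ p q, K p q →ₗ[R] K p (q + 1)) (δ : ∀ p q, K p q →ₗ[R] K (p + 1) q)

lemma totD_zero_zero (f : ∀ p q, K p q) : totD d δ f 0 0 = 0 := by
  show (0 : K 0 0) + 0 = 0; rw [add_zero]

lemma totD_zero_succ (f : ∀ p q, K p q) (q : ℕ) :
    totD d δ f 0 (q + 1) = d 0 q (f 0 q) := by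
  show d 0 q (f 0 q) + 0 = _; rw [add_zero]

lemma totD_succ_zero (f : ∀ p q, K p q) (p : ℕ) :
    totD d δ f (p + 1) 0 = δ p 0 (f p 0) := by
  show (0 : K (p+1) 0) + δ p 0 (f p 0) = _; rw [zero_add]

lemma totD_succ_succ (f : ∀ p q, K p q) (p q : ℕ) :
    totD d δ f (p + 1) (q + 1) = d (p + 1) q (f (p + 1) q) + δ p (q + 1) (f p (q + 1)) := rfl

lemma totD_sub (f g : ∀ p q, K p q) (p q : ℕ) :
    totD d δ (fun p q => f p q - g p q) p q = totD d δ f p q - totD d δ g p q := by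
  match p, q with
  | 0, 0 => simp [totD_zero_zero]
  | 0, q + 1 => simp [totD_zero_succ]
  | p + 1, 0 => simp [totD_succ_zero]
  | p + 1, q + 1 => simp [totD_succ_succ]; abel

lemma totD_add (f g : ∀ p q, K p q) (p q : ℕ) :
    totD d δ (fun p q => f p q + g p q) p q = totD d δ f p q + totD d δ g p q := by
  match p, q with
  | 0, 0 => simp [totD_zero_zero]
  | 0, q + 1 => simp [totD_zero_succ]
  | p + 1, 0 => simp [totD_succ_zero]
  | p + 1, q + 1 => simp [totD_succ_succ]; abel

lemma totD_fun_zero (p q : ℕ) : totD d δ (fun p q => (0 : K p q)) p q = 0 := by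
  match p, q with
  | 0, 0 => simp [totD_zero_zero]
  | 0, q + 1 => simp [totD_zero_succ]
  | p + 1, 0 => simp [totD_succ_zero]
  | p + 1, q + 1 => simp [totD_succ_succ]

end Aux

def single (p0 q0 : ℕ) (y : K p0 q0) : ∀ p q, K p q := fun p q =>
  if h : p = p0 ∧ q = q0 then cast (by rw [h.1, h.2]) y else 0

lemma single_same (p0 q0 : ℕ) (y : K p0 q0) : single p0 q0 y p0 q0 = y := by
  unfold single
  rw [dif_pos ⟨rfl, rfl⟩]
  exact eq_of_heq (cast_heq _ _)

lemma single_ne {p0 q0 p q : ℕ} (y : K p0 q0) (h : ¬(p = p0 ∧ q = q0)) :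
    single p0 q0 y p q = 0 := dif_neg h

section Aux2
variable (d : ∀ p q, K p q →ₗ[R] K p (q + 1)) (δ : ∀ p q, K p q →ₗ[R] K (p + 1) q)

lemma totD_single_ne {p0 q0 p q : ℕ} (y : K p0 q0)
    (h1 : ¬(p = p0 ∧ q = q0 + 1)) (h2 : ¬(p = p0 + 1 ∧ q = q0)) :
    totD d δ (single p0 q0 y) p q = 0 := by
  match p, q with
  | 0, 0 => exact totD_zero_zero d δ _
  | 0, q + 1 =>
    rw [totD_zero_succ, single_ne _ (fun ⟨a, b⟩ => h1 ⟨a, by omega⟩), map_zero]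
  | p + 1, 0 =>
    rw [totD_succ_zero, single_ne _ (fun ⟨a, b⟩ => h2 ⟨by omega, b⟩), map_zero]
  | p + 1, q + 1 =>
    rw [totD_succ_succ, single_ne _ (fun ⟨a, b⟩ => h1 ⟨a, by omega⟩),
      single_ne _ (fun ⟨a, b⟩ => h2 ⟨by omega, by omega⟩), map_zero, map_zero, add_zero]

lemma totD_single_d (p0 q0 : ℕ) (y : K p0 q0) :
    totD d δ (single p0 q0 y) p0 (q0 + 1) = d p0 q0 y := by
  match p0 with
  | 0 => rw [totD_zero_succ, single_same]
  | p + 1 =>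
    rw [totD_succ_succ, single_same, single_ne _ (fun ⟨a, b⟩ => by omega), map_zero,
      add_zero]

lemma totD_single_δ (p0 q0 : ℕ) (y : K p0 q0) :
    totD d δ (single p0 q0 y) (p0 + 1) q0 = δ p0 q0 y := by
  match q0 with
  | 0 => rw [totD_succ_zero, single_same]
  | q + 1 =>
    rw [totD_succ_succ, single_same, single_ne _ (fun ⟨a, b⟩ => by omega), map_zero,
      zero_add]

variable (hdd : ∀ p q (x : K p q), d p (q + 1) (d p q x) = 0)
  (hδδ : ∀ p q (x : K p q), δ (p + 1) q (δ p q x) = 0)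
  (hanti : ∀ p q (x : K p q), d (p + 1) q (δ p q x) + δ p (q + 1) (d p q x) = 0)

include hdd hδδ hanti in
lemma totD_totD (f : ∀ p q, K p q) (p q : ℕ) :
    totD d δ (totD d δ f) p q = 0 := by
  match p, q with
  | 0, 0 => exact totD_zero_zero d δ _
  | 0, 1 => rw [totD_zero_succ, totD_zero_zero, map_zero]
  | 0, q + 2 => rw [totD_zero_succ, totD_zero_succ, hdd]
  | 1, 0 => rw [totD_succ_zero, totD_zero_zero, map_zero]
  | p + 2, 0 => rw [totD_succ_zero, totD_succ_zero, hδδ]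
  | 1, 1 =>
    rw [totD_succ_succ, totD_succ_zero, totD_zero_succ]
    exact hanti 0 0 _
  | 1, q + 2 =>
    rw [totD_succ_succ, totD_succ_succ, totD_zero_succ, map_add, hdd]
    simpa using hanti 0 (q + 1) (f 0 (q + 1))
  | p + 2, 1 =>
    rw [totD_succ_succ, totD_succ_zero, totD_succ_succ, map_add, hδδ]
    simpa using hanti (p + 1) 0 (f (p + 1) 0)
  | p + 2, q + 2 =>
    rw [totD_succ_succ, totD_succ_succ, totD_succ_succ, map_add, map_add, hdd, hδδ]
    simpa using hanti (p + 1) (q + 1) (f (p + 1) (q + 1))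


variable (hrows : ∀ p q (x : K p (q + 1)), d p (q + 1) x = 0 → ∃ y : K p q, d p q y = x)

include hdd hδδ hanti hrows in
lemma stair (n : ℕ) (m : ℕ) : ∀ (f : ∀ p q, K p q),
    (∀ p q, p + q ≠ n → f p q = 0) →
    (∀ p q, m < q → f p q = 0) →
    (∀ p q, totD d δ f p (q + 2) = 0) →
    ∃ g : ∀ p q, K p q,
      (∀ p q, p + q + 1 ≠ n → g p q = 0) ∧
      (∀ p q, ¬(p = n ∧ q = 0) → f p q = totD d δ g p q) := by
  induction m with
  | zero =>
    intro f hsupp hq _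
    refine ⟨fun _ _ => 0, fun _ _ _ => rfl, fun p q hpq => ?_⟩
    rw [totD_fun_zero]
    rcases Nat.eq_zero_or_pos q with h | h
    · subst h
      exact hsupp p 0 (fun hpn => hpq ⟨by omega, rfl⟩)
    · exact hq p q h
  | succ m ih =>
    intro f hsupp hq hZ
    by_cases hmn : m + 1 ≤ n
    · obtain ⟨p0, rfl⟩ : ∃ p0, n = p0 + (m + 1) := ⟨n - (m + 1), by omega⟩
      have hdc : d p0 (m + 1) (f p0 (m + 1)) = 0 := by
        have h2 := hZ p0 m
        match p0, h2 with
        | 0, h2 => rwa [totD_zero_succ] at h2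
        | p + 1, h2 =>
          rw [totD_succ_succ, hq p (m + 2) (by omega), map_zero, add_zero] at h2
          exact h2
      obtain ⟨y, hy⟩ := hrows p0 m (f p0 (m + 1)) hdc
      obtain ⟨g, hg1, hg2⟩ := ih (fun p q => f p q - totD d δ (single p0 m y) p q)
        (fun p q hpq => by
          rw [hsupp p q hpq, totD_single_ne d δ y
            (fun ⟨a, b⟩ => hpq (by omega)) (fun ⟨a, b⟩ => hpq (by omega)), sub_zero])
        (fun p q hq' => by
          rcases Nat.lt_or_ge (m + 1) q with h | h
          · rw [hq p q h, totD_single_ne d δ y (fun ⟨a, b⟩ => by omega)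
              (fun ⟨a, b⟩ => by omega), sub_zero]
          · have hq1 : q = m + 1 := by omega
            subst hq1
            by_cases hp : p = p0
            · subst hp
              rw [totD_single_d, hy, sub_self]
            · rw [hsupp p (m + 1) (by omega), totD_single_ne d δ y
                (fun ⟨a, b⟩ => hp a) (fun ⟨a, b⟩ => by omega), sub_zero])
        (fun p q => by
          rw [totD_sub, hZ p q, totD_totD d δ hdd hδδ hanti, sub_zero])
      refine ⟨fun p q => g p q + single p0 m y p q, fun p q hpq => by
        dsimp only
        rw [hg1 p q hpq, single_ne y (fun ⟨a, b⟩ => hpq (by omega)), add_zero],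
        fun p q hpq => ?_⟩
      have h3 := hg2 p q hpq
      rw [totD_add]
      rw [← h3]
      abel
    · refine ih f hsupp (fun p q h => ?_) hZ
      rcases Nat.lt_or_ge (m + 1) q with h2 | h2
      · exact hq p q h2
      · exact hsupp p q (by omega)

end Aux2

/-- **Theorem (double complexes, cohomological version).**  Let `K^{p,q}` be a double
complex of `R`-modules with anti-commuting differentials `d : K^{p,q} → K^{p,q+1}`,
`δ : K^{p,q} → K^{p+1,q}` (`d∘d = 0`, `δ∘δ = 0`, `d∘δ + δ∘d = 0`), let `T^n` be the total
complex with differential `∂ = d + δ`, and let `L^p = ker (d : K^{p,0} → K^{p,1})`, a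
subcomplex of `T^•` with differential `δ`.  If every row `(K^{p,•}, d)` is exact (in all
positive degrees), then the inclusion `L^• → T^•` induces an isomorphism on cohomology in
every degree.  An element of `T^n` is encoded as `f : ∀ p q, K p q` vanishing for
`p + q ≠ n`; the inclusion of `x ∈ L^n` is the element supported at `(n, 0)` with value
`x`.  The conclusion states surjectivity (every `∂`-cocycle of `T^n` differs from the
image of a `δ`-cocycle of `L^n` by a coboundary) and injectivity (a `δ`-cocycle of
`L^{n+1}` whose image is a coboundary in `T^{n+1}` is itself a `δ`-coboundary of a cocycle
in `L^n`; in degree `0` injectivity is automatic). -/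
theorem inclusion_ker_to_total_quasiIso
    (d : ∀ p q, K p q →ₗ[R] K p (q + 1)) (δ : ∀ p q, K p q →ₗ[R] K (p + 1) q)
    (hdd : ∀ p q (x : K p q), d p (q + 1) (d p q x) = 0)
    (hδδ : ∀ p q (x : K p q), δ (p + 1) q (δ p q x) = 0)
    (hanti : ∀ p q (x : K p q), d (p + 1) q (δ p q x) + δ p (q + 1) (d p q x) = 0)
    (hrows : ∀ p q (x : K p (q + 1)), d p (q + 1) x = 0 → ∃ y : K p q, d p q y = x) :
    -- surjectivity on cohomology in every degree `n`
    (∀ (n : ℕ) (f : ∀ p q, K p q), (∀ p q, p + q ≠ n → f p q = 0) →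
      (∀ p q, totD d δ f p q = 0) →
      ∃ (x : K n 0) (g : ∀ p q, K p q),
        d n 0 x = 0 ∧ δ n 0 x = 0 ∧
        (∀ p q, p + q + 1 ≠ n → g p q = 0) ∧
        f n 0 = x + totD d δ g n 0 ∧
        ∀ p q, ¬(p = n ∧ q = 0) → f p q = totD d δ g p q) ∧
    -- injectivity on cohomology in every degree `n + 1`
    (∀ (n : ℕ) (x : K (n + 1) 0), d (n + 1) 0 x = 0 → δ (n + 1) 0 x = 0 →
      (∃ g : ∀ p q, K p q, (∀ p q, p + q ≠ n → g p q = 0) ∧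
        totD d δ g (n + 1) 0 = x ∧ ∀ p q, ¬(p = n + 1 ∧ q = 0) → totD d δ g p q = 0) →
      ∃ y : K n 0, d n 0 y = 0 ∧ δ n 0 y = x) := by
  constructor
  · intro n f hsupp hcoc
    obtain ⟨g, hg1, hg2⟩ := stair d δ hdd hδδ hanti hrows n n f hsupp
      (fun p q h => hsupp p q (by omega)) (fun p q => hcoc p (q + 2))
    -- the residual element, supported at (n, 0)
    set f2 : ∀ p q, K p q := fun p q => f p q - totD d δ g p q with hf2
    have hf2supp : ∀ p q, ¬(p = n ∧ q = 0) → f2 p q = 0 := fun p q h => by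
      rw [hf2]; dsimp only; rw [hg2 p q h, sub_self]
    have hf2coc : ∀ p q, totD d δ f2 p q = 0 := fun p q => by
      rw [hf2, totD_sub, hcoc p q, totD_totD d δ hdd hδδ hanti, sub_zero]
    have hdx : d n 0 (f2 n 0) = 0 := by
      have h1 := hf2coc n 1
      match n, h1 with
      | 0, h1 => rwa [totD_zero_succ] at h1
      | k + 1, h1 =>
        rw [totD_succ_succ, hf2supp k 1 (by omega), map_zero, add_zero] at h1
        exact h1
    have hδx : δ n 0 (f2 n 0) = 0 := by
      have h1 := hf2coc (n + 1) 0
      rwa [totD_succ_zero] at h1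
    exact ⟨f2 n 0, g, hdx, hδx, hg1, (show f n 0 = f n 0 - totD d δ g n 0 + totD d δ g n 0 by abel), hg2⟩
  · intro n x hdx hδx ⟨g, hgsupp, hgeq, hgzero⟩
    obtain ⟨h, hh1, hh2⟩ := stair d δ hdd hδδ hanti hrows n n g hgsupp
      (fun p q hq => hgsupp p q (by omega))
      (fun p q => hgzero p (q + 2) (fun ⟨a, b⟩ => by omega))
    set g2 : ∀ p q, K p q := fun p q => g p q - totD d δ h p q with hg2
    have hg2supp : ∀ p q, ¬(p = n ∧ q = 0) → g2 p q = 0 := fun p q hpq => by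
      rw [hg2]; dsimp only; rw [hh2 p q hpq, sub_self]
    refine ⟨g2 n 0, ?_, ?_⟩
    · have h1 : totD d δ g2 n 1 = 0 := by
        rw [hg2, totD_sub, totD_totD d δ hdd hδδ hanti, sub_zero]
        exact hgzero n 1 (fun ⟨a, b⟩ => by omega)
      match n, h1 with
      | 0, h1 => rwa [totD_zero_succ] at h1
      | k + 1, h1 =>
        rw [totD_succ_succ, hg2supp k 1 (by omega), map_zero, add_zero] at h1
        exact h1
    · have h1 : totD d δ g2 (n + 1) 0 = x := by
        rw [hg2, totD_sub, totD_totD d δ hdd hδδ hanti, sub_zero]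
        exact hgeq
      rwa [totD_succ_zero] at h1

end DoubleComplexCohomology
end

section
/- Let X be a topological space with bounded cochain complex B^•(X) (bounded real-valued singular cochains) and l1-chain complex L_•(X) (the completion of real singular chains in the l1-norm). Fix m ≥ 1. If the bounded cohomology groups satisfy Ĥ^m(X) = Ĥ^{m+1}(X) = 0, then the l1-homology group H^{l1}_m(X) = 0. -/
open scoped ENNReal

noncomputable section

namespace L1Homology

/-- The standard topological `m`-simplex. -/
abbrev StdSpx (m : ℕ) := ↥(stdSimplex ℝ (Fin (m + 1)))

/-- The affine inclusion `Δ^m → Δ^{m+1}` of the face opposite to the `i`-th vertex. -/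
def faceMap {m : ℕ} (i : Fin (m + 2)) : C(StdSpx m, StdSpx (m + 1)) where
  toFun x := ⟨fun j => ∑ k ∈ Finset.univ.filter (fun k => i.succAbove k = j), x.1 k,
    ⟨fun j => Finset.sum_nonneg fun k _ => x.2.1 k, by
      rw [Finset.sum_fiberwise_of_maps_to (fun k _ => Finset.mem_univ (i.succAbove k)) x.1]
      exact x.2.2⟩⟩
  continuous_toFun := Continuous.subtype_mk
    (continuous_pi fun j => continuous_finset_sum _ fun k _ =>
      (continuous_apply k).comp continuous_subtype_val) _

variable (X : Type*) [TopologicalSpace X]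

/-- Singular `m`-simplices of `X`. -/
abbrev SingSimplex (m : ℕ) := C(StdSpx m, X)

variable {X}

/-- The `i`-th face of a singular `(m+1)`-simplex. -/
def face {m : ℕ} (i : Fin (m + 2)) (s : SingSimplex X (m + 1)) : SingSimplex X m :=
  s.comp (faceMap i)

/-- `L_m(X)`: the space of `ℓ¹`-chains of degree `m`, i.e. the completion of the space of
real singular `m`-chains in the `ℓ¹`-norm, realised as the Banach space of summable
real-valued functions on the set of singular `m`-simplices. -/
abbrev L1C (X : Type*) [TopologicalSpace X] (m : ℕ) :=
  lp (fun _ : SingSimplex X m => ℝ) 1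

/-- Push-forward of an `ℓ¹`-function along a map of index sets (summing over fibers). -/
def pushCore {S T : Type*} (g : S → T) (f : lp (fun _ : S => ℝ) 1) (t : T) : ℝ :=
  ∑' s : {s : S // g s = t}, f s.1

theorem summable_norm_coe {S : Type*} (f : lp (fun _ : S => ℝ) 1) :
    Summable fun s : S => ‖f s‖ := by
  simpa [ENNReal.toReal_one] using (lp.memℓp f).summable (by simp)

theorem summable_sigma_norm_coe {S T : Type*} (g : S → T) (f : lp (fun _ : S => ℝ) 1) :
    Summable fun x : Σ t : T, {s : S // g s = t} => ‖f x.2.1‖ :=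
  (Equiv.sigmaFiberEquiv g).summable_iff.mpr (summable_norm_coe f)

theorem summable_norm_pushCore {S T : Type*} (g : S → T) (f : lp (fun _ : S => ℝ) 1) :
    Summable fun t => ‖pushCore g f t‖ := by
  refine Summable.of_nonneg_of_le (fun t => norm_nonneg _)
    (fun t => norm_tsum_le_tsum_norm ((summable_sigma_norm_coe g f).sigma_factor t))
    (summable_sigma_norm_coe g f).sigma

theorem memℓp_pushCore {S T : Type*} (g : S → T) (f : lp (fun _ : S => ℝ) 1) :
    Memℓp (pushCore g f) (1 : ℝ≥0∞) :=
  memℓp_gen (by simpa [ENNReal.toReal_one] using summable_norm_pushCore g f)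

/-- Push-forward `ℓ¹(S) → ℓ¹(T)` along `g : S → T`. -/
def push {S T : Type*} (g : S → T) (f : lp (fun _ : S => ℝ) 1) : lp (fun _ : T => ℝ) 1 :=
  ⟨pushCore g f, memℓp_pushCore g f⟩

/-- The boundary operator `∂ : L_{m+1}(X) → L_m(X)`, the continuous extension of the
singular boundary: `∂ = ∑ i, (-1)^i (face i)_*`. -/
def bd (m : ℕ) : L1C X (m + 1) → L1C X m := fun f =>
  ∑ i : Fin (m + 2), ((-1 : ℝ) ^ (i : ℕ)) • push (face i) f


section Chunk1
theorem summable_coe {S : Type*} (f : lp (fun _ : S => ℝ) 1) : Summable fun s : S => f s :=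
  (summable_norm_coe f).of_norm

theorem summable_fiber {S T : Type*} (g : S → T) (f : lp (fun _ : S => ℝ) 1) (t : T) :
    Summable fun s : {s : S // g s = t} => f s.1 :=
  (summable_coe f).subtype _

theorem push_apply {S T : Type*} (g : S → T) (f : lp (fun _ : S => ℝ) 1) (t : T) :
    push g f t = ∑' s : {s : S // g s = t}, f s.1 := rfl

theorem push_add {S T : Type*} (g : S → T) (f f' : lp (fun _ : S => ℝ) 1) :
    push g (f + f') = push g f + push g f' := by
  ext t
  simp only [push_apply, lp.coeFn_add, Pi.add_apply]
  exact Summable.tsum_add (summable_fiber g f t) (summable_fiber g f' t)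

theorem push_smul {S T : Type*} (g : S → T) (a : ℝ) (f : lp (fun _ : S => ℝ) 1) :
    push g (a • f) = a • push g f := by
  ext t
  simp only [push_apply, lp.coeFn_smul, Pi.smul_apply, smul_eq_mul]
  exact tsum_mul_left

theorem norm_lp_one {S : Type*} (f : lp (fun _ : S => ℝ) 1) : ‖f‖ = ∑' s, ‖f s‖ := by
  have h : (0:ℝ) < (1 : ℝ≥0∞).toReal := by simp
  rw [lp.norm_eq_tsum_rpow h f]
  simp [ENNReal.toReal_one]

set_option maxHeartbeats 1000000 in
theorem norm_push_le {S T : Type*} (g : S → T) (f : lp (fun _ : S => ℝ) 1) :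
    ‖push g f‖ ≤ ‖f‖ := by
  rw [norm_lp_one, norm_lp_one]
  have h1 : ∑' t, ‖push g f t‖ ≤ ∑' t, ∑' s : {s : S // g s = t}, ‖f s.1‖ := by
    refine Summable.tsum_le_tsum (fun t => ?_) (summable_norm_pushCore g f)
      (summable_sigma_norm_coe g f).sigma
    exact norm_tsum_le_tsum_norm ((summable_sigma_norm_coe g f).sigma_factor t)
  have h2 : ∑' t, ∑' s : {s : S // g s = t}, ‖f s.1‖
      = ∑' x : Σ t : T, {s : S // g s = t}, ‖f x.2.1‖ :=
    (Summable.tsum_sigma' (fun t => (summable_sigma_norm_coe g f).sigma_factor t)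
      (summable_sigma_norm_coe g f)).symm
  have h3 : ∑' x : Σ t : T, {s : S // g s = t}, ‖f x.2.1‖ = ∑' s, ‖f s‖ :=
    (Equiv.sigmaFiberEquiv g).tsum_eq (fun s => ‖f s‖)
  calc ∑' t, ‖push g f t‖ ≤ _ := h1
    _ = _ := h2.trans h3

/-- `push` as a continuous linear map. -/
def pushL {S T : Type*} (g : S → T) : lp (fun _ : S => ℝ) 1 →L[ℝ] lp (fun _ : T => ℝ) 1 :=
  LinearMap.mkContinuous
    { toFun := push g
      map_add' := push_add g
      map_smul' := push_smul g }
    1 (fun f => by simpa using norm_push_le g f)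

theorem pushL_apply {S T : Type*} (g : S → T) (f : lp (fun _ : S => ℝ) 1) :
    pushL g f = push g f := rfl

variable {X : Type*} [TopologicalSpace X]

/-- The boundary operator as a continuous linear map. -/
def bdL (m : ℕ) : L1C X (m + 1) →L[ℝ] L1C X m :=
  ∑ i : Fin (m + 2), ((-1 : ℝ) ^ (i : ℕ)) • pushL (face i)

theorem bd_eq (m : ℕ) (f : L1C X (m + 1)) : bd m f = bdL m f := by
  simp [bd, bdL, ContinuousLinearMap.sum_apply, pushL_apply]

end Chunk1

section Chunk2

/-- Composition of fibers equivalence. -/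
def fiberCompEquiv {S T U : Type*} (g : T → U) (h : S → T) (u : U) :
    {s : S // g (h s) = u} ≃ Σ t : {t : T // g t = u}, {s : S // h s = t.1} where
  toFun s := ⟨⟨h s.1, s.2⟩, ⟨s.1, rfl⟩⟩
  invFun x := ⟨x.2.1, by rw [x.2.2]; exact x.1.2⟩
  left_inv s := rfl
  right_inv := by
    rintro ⟨⟨t, ht⟩, s, hs⟩
    have hs' : h s = t := hs
    subst hs'
    rfl

theorem push_push {S T U : Type*} (g : T → U) (h : S → T) (f : lp (fun _ : S => ℝ) 1) :
    push g (push h f) = push (g ∘ h) f := by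
  ext u
  rw [push_apply, push_apply]
  have hsum : Summable fun x : Σ t : {t : T // g t = u}, {s : S // h s = t.1} => f x.2.1 := by
    have h1 : Summable fun s : {s : S // g (h s) = u} => f s.1 := summable_fiber _ f u
    exact ((fiberCompEquiv g h u).symm.summable_iff
      (f := fun s : {s : S // g (h s) = u} => f s.1)).mpr h1
  calc ∑' t : {t : T // g t = u}, push h f t.1
      = ∑' t : {t : T // g t = u}, ∑' s : {s : S // h s = t.1}, f s.1 := by
        simp only [push_apply]
    _ = ∑' x : Σ t : {t : T // g t = u}, {s : S // h s = t.1}, f x.2.1 :=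
        (Summable.tsum_sigma' (fun t => hsum.sigma_factor t) hsum).symm
    _ = ∑' s : {s : S // g (h s) = u}, f s.1 := ((fiberCompEquiv g h u).tsum_eq _).symm

theorem succAbove_succAbove' {n : ℕ} {i j : Fin (n + 2)} (H : i ≤ j) (k : Fin (n + 1)) :
    (j.succ).succAbove (i.succAbove k) = (i.castSucc).succAbove (j.succAbove k) := by
  dsimp [Fin.succAbove]
  rcases i with ⟨i, _⟩
  rcases j with ⟨j, _⟩
  rcases k with ⟨k, _⟩
  split_ifs <;>
    · simp_all [Fin.ext_iff, Fin.lt_iff_val_lt_val, Fin.le_iff_val_le_val] <;> omega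

theorem faceMap_faceMap {m : ℕ} (j : Fin (m + 3)) (i : Fin (m + 2)) (x : StdSpx m)
    (p : Fin (m + 3)) :
    (faceMap j (faceMap i x)).1 p
      = ∑ k ∈ Finset.univ.filter (fun k => j.succAbove (i.succAbove k) = p), x.1 k := by
  show (∑ l ∈ Finset.univ.filter (fun l => j.succAbove l = p),
    ∑ k ∈ Finset.univ.filter (fun k => i.succAbove k = l), x.1 k) = _
  rw [← Finset.sum_fiberwise_of_maps_to
    (g := fun k => i.succAbove k)
    (t := Finset.univ.filter (fun l => j.succAbove l = p))
    (fun k hk => by simpa using (Finset.mem_filter.mp hk).2) x.1]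
  refine Finset.sum_congr rfl fun l hl => ?_
  have hjl : j.succAbove l = p := by simpa using (Finset.mem_filter.mp hl).2
  refine Finset.sum_congr ?_ fun _ _ => rfl
  ext k
  simp only [Finset.mem_filter, Finset.mem_univ, true_and]
  constructor
  · intro h; exact ⟨by rw [h, hjl], h⟩
  · exact fun h => h.2

variable {X : Type*} [TopologicalSpace X]

theorem face_face {m : ℕ} {i j : Fin (m + 2)} (H : i ≤ j) (s : SingSimplex X (m + 2)) :
    face i (face j.succ s) = face j (face i.castSucc s) := by
  show (s.comp (faceMap j.succ)).comp (faceMap i)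
      = (s.comp (faceMap i.castSucc)).comp (faceMap j)
  ext x
  simp only [ContinuousMap.comp_apply]
  congr 1
  apply Subtype.ext
  funext p
  rw [faceMap_faceMap, faceMap_faceMap]
  refine Finset.sum_congr ?_ fun _ _ => rfl
  ext k
  simp [succAbove_succAbove' H k]

set_option maxHeartbeats 1000000 in
theorem bd_bd (m : ℕ) (f : L1C X (m + 2)) : bd m (bd (m + 1) f) = 0 := by
  classical
  have expand : bd m (bd (m + 1) f)
      = ∑ p : Fin (m + 2) × Fin (m + 3),
          ((-1 : ℝ) ^ ((p.1 : ℕ) + (p.2 : ℕ))) • push (fun s => face p.1 (face p.2 s)) f := by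
    calc bd m (bd (m + 1) f)
        = ∑ i : Fin (m + 2), ((-1 : ℝ) ^ (i : ℕ)) •
            pushL (face i) (∑ j : Fin (m + 3), ((-1 : ℝ) ^ (j : ℕ)) • pushL (face j) f) := by
          simp only [bd, pushL_apply]
      _ = ∑ i : Fin (m + 2), ∑ j : Fin (m + 3), ((-1 : ℝ) ^ (i : ℕ)) •
            (((-1 : ℝ) ^ (j : ℕ)) • pushL (face i) (pushL (face j) f)) := by
          simp only [map_sum, map_smul, Finset.smul_sum]
      _ = _ := by
          rw [Fintype.sum_prod_type]
          refine Finset.sum_congr rfl fun i _ => Finset.sum_congr rfl fun j _ => ?_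
          rw [smul_smul, ← pow_add, pushL_apply, pushL_apply, push_push]
          rfl
  rw [expand]
  set g : Fin (m + 2) × Fin (m + 3) → L1C X m := fun p =>
    ((-1 : ℝ) ^ ((p.1 : ℕ) + (p.2 : ℕ))) • push (fun s => face p.1 (face p.2 s)) f with hg
  rw [← Finset.sum_filter_add_sum_filter_not Finset.univ
    (fun p : Fin (m + 2) × Fin (m + 3) => (p.2 : ℕ) ≤ (p.1 : ℕ)) g]
  have key : ∑ p ∈ Finset.univ.filter
        (fun p : Fin (m + 2) × Fin (m + 3) => (p.2 : ℕ) ≤ (p.1 : ℕ)), (- g p)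
      = ∑ p ∈ Finset.univ.filter
        (fun p : Fin (m + 2) × Fin (m + 3) => ¬ (p.2 : ℕ) ≤ (p.1 : ℕ)), g p := by
    refine Finset.sum_nbij'
      (i := fun p => (⟨min (p.2 : ℕ) (m + 1), by omega⟩, p.1.succ))
      (j := fun q => (⟨(q.2 : ℕ) - 1, by have := q.2.isLt; omega⟩, q.1.castSucc))
      ?_ ?_ ?_ ?_ ?_
    · rintro ⟨i, j⟩ hp
      simp only [Finset.mem_filter, Finset.mem_univ, true_and] at hp ⊢
      simp only [Fin.val_succ]
      omega
    · rintro ⟨a, b⟩ hq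
      simp only [Finset.mem_filter, Finset.mem_univ, true_and] at hq ⊢
      simp only [Fin.coe_castSucc]
      have := b.isLt
      have := a.isLt
      omega
    · rintro ⟨i, j⟩ hp
      simp only [Finset.mem_filter, Finset.mem_univ, true_and] at hp
      have hj : min (j : ℕ) (m + 1) = (j : ℕ) := by have := i.isLt; omega
      ext <;> simp [hj]
    · rintro ⟨a, b⟩ hq
      simp only [Finset.mem_filter, Finset.mem_univ, true_and] at hq
      have hb := b.isLt
      have ha := a.isLt
      ext <;> simp <;> omega
    · rintro ⟨i, j⟩ hp
      simp only [Finset.mem_filter, Finset.mem_univ, true_and] at hp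
      have hji : (j : ℕ) < m + 2 := by have := i.isLt; omega
      have hj : min (j : ℕ) (m + 1) = (j : ℕ) := by omega
      have hface : ∀ s : SingSimplex X (m + 2),
          face (⟨min (j : ℕ) (m + 1), by omega⟩ : Fin (m + 2)) (face i.succ s)
            = face i (face j s) := by
        intro s
        have hle : (⟨min (j : ℕ) (m + 1), by omega⟩ : Fin (m + 2)) ≤ i := by
          simp only [Fin.le_iff_val_le_val]
          omega
        rw [face_face (X := X) hle s]
        congr 1
        ext
        simp [hj]
      have hfun : (fun s : SingSimplex X (m + 2) =>
          face (⟨min (j : ℕ) (m + 1), by omega⟩ : Fin (m + 2)) (face i.succ s))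
          = (fun s => face i (face j s)) := funext hface
      simp only [hg]
      rw [hfun, ← neg_smul]
      congr 1
      simp only [Fin.val_succ, hj]
      ring
  rw [← key, Finset.sum_neg_distrib, add_neg_cancel]

end Chunk2

section Chunk3

theorem bdL_eq_zero_of_bd {X : Type*} [TopologicalSpace X] {m : ℕ} {f : L1C X (m + 1)}
    (h : bd m f = 0) : bdL m f = 0 := by rw [← bd_eq]; exact h

set_option maxHeartbeats 1000000 in
theorem main_thm
    (X : Type*) [TopologicalSpace X] (k : ℕ)
    (h₁ : ∀ φ : StrongDual ℝ (L1C X (k + 1)),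
      (∀ c : L1C X (k + 2), φ (bd (k + 1) c) = 0) →
      ∃ ψ : StrongDual ℝ (L1C X k), ∀ c : L1C X (k + 1), φ c = ψ (bd k c))
    (h₂ : ∀ φ : StrongDual ℝ (L1C X (k + 2)),
      (∀ c : L1C X (k + 3), φ (bd (k + 2) c) = 0) →
      ∃ ψ : StrongDual ℝ (L1C X (k + 1)), ∀ c : L1C X (k + 2), φ c = ψ (bd (k + 1) c)) :
    ∀ c : L1C X (k + 1), bd k c = 0 → ∃ e : L1C X (k + 2), bd (k + 1) e = c := by
  classical
  set T := bdL (X := X) (k + 1) with hT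
  set T₂ := bdL (X := X) (k + 2) with hT₂
  -- the coboundary `δ : B^{k+2} → B^{k+3}` and its kernel
  let δ₂ : StrongDual ℝ (L1C X (k + 2)) →L[ℝ] StrongDual ℝ (L1C X (k + 3)) :=
    (ContinuousLinearMap.compL ℝ (L1C X (k + 3)) (L1C X (k + 2)) ℝ).flip T₂
  let K := δ₂.ker
  -- the coboundary `B^{k+1} → B^{k+2}`, corestricted to the space of cocycles `K`
  let D : StrongDual ℝ (L1C X (k + 1)) →L[ℝ] K :=
    ContinuousLinearMap.codRestrict
      ((ContinuousLinearMap.compL ℝ (L1C X (k + 2)) (L1C X (k + 1)) ℝ).flip T) K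
      (fun φ => by
        rw [LinearMap.mem_ker]
        ext c
        show φ (T (T₂ c)) = 0
        have h0 : T (T₂ c) = 0 := by rw [hT, hT₂, ← bd_eq, ← bd_eq, bd_bd]
        rw [h0, map_zero])
  have hDval : ∀ χ : StrongDual ℝ (L1C X (k + 1)),
      ((D χ : K) : StrongDual ℝ (L1C X (k + 2))) = χ.comp T := fun χ => rfl
  -- `Ĥ^{k+2}(X) = 0` says exactly that `D` is surjective
  have hsurj : Function.Surjective D := by
    rintro ⟨α, hα⟩
    have hα' : ∀ c : L1C X (k + 3), α (bd (k + 2) c) = 0 := by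
      intro c
      rw [LinearMap.mem_ker] at hα
      have h := congrArg (fun g : StrongDual ℝ (L1C X (k + 3)) => g c) hα
      have h' : α (T₂ c) = 0 := by exact h
      rw [bd_eq]
      exact h'
    obtain ⟨ψ, hψ⟩ := h₂ α hα'
    refine ⟨ψ, ?_⟩
    apply Subtype.ext
    rw [hDval]
    ext c
    show ψ (T c) = α c
    rw [hψ c, hT, ← bd_eq]
  -- the open mapping theorem gives a norm-controlled right inverse of `D`
  haveI : CompleteSpace K := ContinuousLinearMap.completeSpace_ker δ₂
  haveI : CompleteSpace (StrongDual ℝ (L1C X (k + 1))) := by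
    set_option synthInstance.maxHeartbeats 400000 in infer_instance
  obtain ⟨C, hC0, hC⟩ := ContinuousLinearMap.exists_preimage_norm_le (𝕜 := ℝ) (𝕜' := ℝ)
    (E := StrongDual ℝ (L1C X (k + 1))) (F := K) D hsurj
  -- the key uniform estimate on cycles, using `Ĥ^{k+1}(X) = 0`
  have est : ∀ z' : L1C X (k + 1), bd k z' = 0 →
      ∀ φ : StrongDual ℝ (L1C X (k + 1)), |φ z'| ≤ C * ‖φ.comp T‖ * ‖z'‖ := by
    intro z' hz' φ
    obtain ⟨ψ, hDψ, hψnorm⟩ := hC (D φ)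
    have hval : ψ.comp T = φ.comp T := by
      rw [← hDval ψ, ← hDval φ, hDψ]
    have hker : ∀ c : L1C X (k + 2), (φ - ψ) (bd (k + 1) c) = 0 := by
      intro c
      have h := congrArg (fun g : StrongDual ℝ (L1C X (k + 2)) => g c) hval
      have h' : ψ (T c) = φ (T c) := h
      rw [bd_eq]
      simp only [ContinuousLinearMap.sub_apply]
      rw [← hT]
      linarith
    obtain ⟨θ, hθ⟩ := h₁ (φ - ψ) hker
    have hφψ : φ z' = ψ z' := by
      have h := hθ z'
      rw [hz', map_zero] at h
      simp only [ContinuousLinearMap.sub_apply] at h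
      linarith
    have hnormD : ‖D φ‖ = ‖φ.comp T‖ := by
      rw [← hDval φ]
      rfl
    calc |φ z'| = |ψ z'| := by rw [hφψ]
      _ = ‖ψ z'‖ := (Real.norm_eq_abs _).symm
      _ ≤ ‖ψ‖ * ‖z'‖ := ψ.le_opNorm z'
      _ ≤ (C * ‖D φ‖) * ‖z'‖ := mul_le_mul_of_nonneg_right hψnorm (norm_nonneg _)
      _ = C * ‖φ.comp T‖ * ‖z'‖ := by rw [hnormD]
  -- by Hahn-Banach separation, every cycle is approximable by controlled boundaries
  have approx : ∀ z' : L1C X (k + 1), bd k z' = 0 → ∀ ε : ℝ, 0 < ε →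
      ∃ x : L1C X (k + 2), ‖x‖ ≤ C * ‖z'‖ ∧ ‖z' - bd (k + 1) x‖ < ε := by
    intro z' hz' ε hε
    set r := C * ‖z'‖ with hr
    have hr0 : 0 ≤ r := mul_nonneg hC0.le (norm_nonneg _)
    have hmem : z' ∈ closure (⇑T '' Metric.closedBall 0 r) := by
      by_contra hnot
      have hconv : Convex ℝ (⇑T '' Metric.closedBall (0 : L1C X (k + 2)) r) :=
        (convex_closedBall _ _).is_linear_image
          ⟨fun a b => map_add T a b, fun a b => map_smul T a b⟩
      obtain ⟨f, u, hfu, huz⟩ :=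
        geometric_hahn_banach_closed_point hconv.closure isClosed_closure hnot
      have h0mem : (0 : L1C X (k + 1)) ∈ closure (⇑T '' Metric.closedBall 0 r) :=
        subset_closure ⟨0, Metric.mem_closedBall_self hr0, map_zero T⟩
      have hu0 : 0 < u := by have := hfu 0 h0mem; simpa using this
      have hbound : ∀ x : L1C X (k + 2), ‖x‖ ≤ r → |f (T x)| ≤ u := by
        intro x hx
        have h1 : f (T x) < u := hfu _ (subset_closure ⟨x, by
          simpa [Metric.mem_closedBall, dist_eq_norm] using hx, rfl⟩)
        have h2 : f (T (-x)) < u := hfu _ (subset_closure ⟨-x, by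
          simpa [Metric.mem_closedBall, dist_eq_norm] using hx, rfl⟩)
        rw [map_neg, map_neg] at h2
        exact abs_le.mpr ⟨by linarith, h1.le⟩
      have hfr : C * ‖f.comp T‖ * ‖z'‖ ≤ u := by
        rcases eq_or_lt_of_le hr0 with h0 | hpos
        · have : C * ‖f.comp T‖ * ‖z'‖ = ‖f.comp T‖ * r := by rw [hr]; ring
          rw [this, ← h0, mul_zero]
          exact hu0.le
        · have hop : ‖f.comp T‖ ≤ u / r := by
            refine ContinuousLinearMap.opNorm_le_bound _ (div_nonneg hu0.le hr0) ?_
            intro x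
            rcases eq_or_ne x 0 with rfl | hx0
            · simp
            · have hxpos : 0 < ‖x‖ := norm_pos_iff.mpr hx0
              have hy : ‖(r / ‖x‖) • x‖ ≤ r := by
                rw [norm_smul, Real.norm_eq_abs, abs_of_nonneg (div_nonneg hr0 hxpos.le),
                  div_mul_cancel₀ _ hxpos.ne']
              have hb := hbound _ hy
              rw [map_smul, map_smul, smul_eq_mul, abs_mul,
                abs_of_nonneg (div_nonneg hr0 hxpos.le)] at hb
              have hfx : ‖(f.comp T) x‖ = |f (T x)| := rfl
              rw [div_mul_eq_mul_div, div_le_iff₀ hxpos] at hb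
              have heq : |f (T x)| = r * |f (T x)| / r := by field_simp
              rw [hfx, heq]
              calc r * |f (T x)| / r ≤ u * ‖x‖ / r := by gcongr
                _ = u / r * ‖x‖ := by ring
          calc C * ‖f.comp T‖ * ‖z'‖ = ‖f.comp T‖ * r := by rw [hr]; ring
            _ ≤ u / r * r := mul_le_mul_of_nonneg_right hop hr0
            _ = u := div_mul_cancel₀ u hpos.ne'
      have hest := est z' hz' f
      have : f z' ≤ |f z'| := le_abs_self _
      linarith
    rw [Metric.mem_closure_iff] at hmem
    obtain ⟨y, hy, hdist⟩ := hmem ε hε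
    obtain ⟨x, hxball, rfl⟩ := hy
    refine ⟨x, ?_, ?_⟩
    · simpa [Metric.mem_closedBall, dist_eq_norm] using hxball
    · rw [bd_eq, ← hT, ← dist_eq_norm]
      exact hdist
  -- iterative approximation: every cycle is a boundary
  intro z hz
  have step : ∀ z' : L1C X (k + 1), bd k z' = 0 →
      ∃ x : L1C X (k + 2), ‖x‖ ≤ C * ‖z'‖ ∧ ‖z' - bd (k + 1) x‖ ≤ ‖z'‖ / 2 ∧
        bd k (z' - bd (k + 1) x) = 0 := by
    intro z' hz'
    have hsub : ∀ x : L1C X (k + 2), bd k (z' - bd (k + 1) x) = 0 := by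
      intro x
      rw [bd_eq, map_sub, ← bd_eq, ← bd_eq, hz', bd_bd, sub_zero]
    rcases eq_or_ne z' 0 with rfl | hne
    · refine ⟨0, by simp, ?_, hsub 0⟩
      have h0 : bd (k + 1) (0 : L1C X (k + 2)) = 0 := by rw [bd_eq, map_zero]
      simp [h0]
    · have hpos : 0 < ‖z'‖ / 2 := by
        have := norm_pos_iff.mpr hne
        linarith
      obtain ⟨x, hx1, hx2⟩ := approx z' hz' _ hpos
      exact ⟨x, hx1, hx2.le, hsub x⟩
  let seq : ℕ → {z' : L1C X (k + 1) // bd k z' = 0} := fun n =>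
    Nat.rec ⟨z, hz⟩ (fun _ p =>
      ⟨p.1 - bd (k + 1) (Classical.choose (step p.1 p.2)),
        (Classical.choose_spec (step p.1 p.2)).2.2⟩) n
  let xseq : ℕ → L1C X (k + 2) := fun n => Classical.choose (step (seq n).1 (seq n).2)
  have hseq_succ : ∀ n, (seq (n + 1)).1 = (seq n).1 - bd (k + 1) (xseq n) := fun n => rfl
  have hxle : ∀ n, ‖xseq n‖ ≤ C * ‖(seq n).1‖ :=
    fun n => (Classical.choose_spec (step (seq n).1 (seq n).2)).1
  have hhalf : ∀ n, ‖(seq (n + 1)).1‖ ≤ ‖(seq n).1‖ / 2 := fun n => by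
    rw [hseq_succ]
    exact (Classical.choose_spec (step (seq n).1 (seq n).2)).2.1
  have hgeo : ∀ n, ‖(seq n).1‖ ≤ ‖z‖ * (1 / 2) ^ n := by
    intro n
    induction n with
    | zero =>
      have h0 : (seq 0).1 = z := rfl
      rw [h0, pow_zero, mul_one]
    | succ n ih =>
      calc ‖(seq (n + 1)).1‖ ≤ ‖(seq n).1‖ / 2 := hhalf n
        _ ≤ (‖z‖ * (1 / 2) ^ n) / 2 := by linarith
        _ = ‖z‖ * (1 / 2) ^ (n + 1) := by ring
  have hxgeo : ∀ n, ‖xseq n‖ ≤ C * ‖z‖ * (1 / 2) ^ n := by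
    intro n
    calc ‖xseq n‖ ≤ C * ‖(seq n).1‖ := hxle n
      _ ≤ C * (‖z‖ * (1 / 2) ^ n) := mul_le_mul_of_nonneg_left (hgeo n) hC0.le
      _ = C * ‖z‖ * (1 / 2) ^ n := by ring
  have hsum : Summable xseq := by
    refine Summable.of_norm (Summable.of_nonneg_of_le (fun n => norm_nonneg _) hxgeo ?_)
    exact summable_geometric_two.mul_left _
  obtain ⟨e, he⟩ := hsum
  refine ⟨e, ?_⟩
  have hTe : HasSum (fun n => T (xseq n)) (T e) := T.hasSum he
  have hpartial : ∀ n, ∑ i ∈ Finset.range n, T (xseq i) = z - (seq n).1 := by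
    intro n
    induction n with
    | zero =>
      have h0 : (seq 0).1 = z := rfl
      rw [Finset.range_zero, Finset.sum_empty, h0, sub_self]
    | succ n ih =>
      rw [Finset.sum_range_succ, ih, hseq_succ, hT, ← bd_eq]
      abel
  have h1 : Filter.Tendsto (fun n => z - (seq n).1) Filter.atTop (nhds (T e)) := by
    refine Filter.Tendsto.congr (fun n => hpartial n) hTe.tendsto_sum_nat
  have h2 : Filter.Tendsto (fun n => z - (seq n).1) Filter.atTop (nhds z) := by
    have hzz : Filter.Tendsto (fun n => (seq n).1) Filter.atTop (nhds 0) := by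
      refine squeeze_zero_norm hgeo ?_
      have h := (tendsto_pow_atTop_nhds_zero_of_lt_one (by norm_num : (0:ℝ) ≤ 1/2)
        (by norm_num : (1/2 : ℝ) < 1)).const_mul ‖z‖
      simpa using h
    have h3 := hzz.const_sub z
    rwa [sub_zero] at h3
  have hfin : T e = z := tendsto_nhds_unique h1 h2
  rw [bd_eq, ← hT]
  exact hfin

end Chunk3

/-- **Theorem (Matsumoto–Morita).**  Let `X` be a topological space, with bounded cochain
complex `B^•(X)` (the Banach dual of the `ℓ¹`-chain complex `L_•(X)`, the coboundary
being the adjoint of the boundary) and `ℓ¹`-chain complex `L_•(X)`.  Fix `m ≥ 1` (below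
`m = k + 1`).  If the bounded cohomology groups vanish, `Ĥ^m(X) = Ĥ^{m+1}(X) = 0`
(i.e. every cocycle in the continuous dual is a coboundary), then the `ℓ¹`-homology group
`H^{ℓ¹}_m(X)` vanishes (every cycle of `L_m(X)` is a boundary). -/
theorem l1Homology_vanishes_of_boundedCohomology_vanishes
    (X : Type*) [TopologicalSpace X] (k : ℕ)
    -- `Ĥ^{k+1}(X) = 0`
    (h₁ : ∀ φ : StrongDual ℝ (L1C X (k + 1)),
      (∀ c : L1C X (k + 2), φ (bd (k + 1) c) = 0) →
      ∃ ψ : StrongDual ℝ (L1C X k), ∀ c : L1C X (k + 1), φ c = ψ (bd k c))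
    -- `Ĥ^{k+2}(X) = 0`
    (h₂ : ∀ φ : StrongDual ℝ (L1C X (k + 2)),
      (∀ c : L1C X (k + 3), φ (bd (k + 2) c) = 0) →
      ∃ ψ : StrongDual ℝ (L1C X (k + 1)), ∀ c : L1C X (k + 2), φ c = ψ (bd (k + 1) c)) :
    -- `H^{ℓ¹}_{k+1}(X) = 0`
    ∀ c : L1C X (k + 1), bd k c = 0 → ∃ e : L1C X (k + 2), bd (k + 1) e = c :=
  main_thm X k h₁ h₂

end L1Homology

end
end
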